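/- (Global equivalence of HSCOP and its MIP, converse direction) Suppose all ψ_{ij} ≥ 0 and φ_{ij}(x) ≥ B for all x ∈ P, with B < 0. If (x̄, z̄) is a global maximizer of: maximize θ(x) + ∑_j ψ_{0j} z_{0j} over x ∈ P, z_{ij} ∈ {0,1}, subject to ∑_j ψ_{ij} z_{ij} ≥ b_i for i = 1,…,m and φ_{ij}(x) ≥ B(1 − z_{ij}) for all (i,j), then x̄ is a global maximizer of: maximize θ(x) + ∑_j ψ_{0j} 1_{[0,∞)}(φ_{0j}(x)) over x ∈ P subject to ∑_j ψ_{ij} 1_{[0,∞)}(φ_{ij}(x)) ≥ b_i for i = 1,…,m. -/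

import Mathlib

/-- Closed Heaviside indicator of `[0, ∞)`. -/
noncomputable def Hs (t : ℝ) : ℝ := if 0 ≤ t then 1 else 0

lemma Hs_mem (t : ℝ) : Hs t = 0 ∨ Hs t = 1 := by
  unfold Hs; split <;> simp

lemma zle_Hs {z t B : ℝ} (hz : z = 0 ∨ z = 1) (h : B * (1 - z) ≤ t) : z ≤ Hs t := by
  rcases hz with hz | hz
  · subst hz; unfold Hs; split <;> norm_num
  · subst hz; simp at h; unfold Hs; simp [h]

lemma Hs_constr {t B : ℝ} (hBt : B ≤ t) : B * (1 - Hs t) ≤ t := by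
  unfold Hs; split
  · next h => simpa
  · simpa using hBt

/-- Converse direction of the global equivalence between the HSCOP and its MIP. -/
theorem mip_global_implies_hscop_global {n m J0 : ℕ} (J : Fin m → ℕ)
    (P : Set (Fin n → ℝ)) (θ : (Fin n → ℝ) → ℝ)
    (ψ0 : Fin J0 → ℝ) (φ0 : Fin J0 → (Fin n → ℝ) → ℝ)
    (ψ : (i : Fin m) → Fin (J i) → ℝ) (φ : (i : Fin m) → Fin (J i) → (Fin n → ℝ) → ℝ)
    (b : Fin m → ℝ) (B : ℝ) (hB : B < 0)
    (hψ0 : ∀ j, 0 ≤ ψ0 j) (hψ : ∀ i j, 0 ≤ ψ i j)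
    (hlow0 : ∀ x ∈ P, ∀ j, B ≤ φ0 j x)
    (hlow : ∀ x ∈ P, ∀ i j, B ≤ φ i j x)
    (xbar : Fin n → ℝ) (hxbar : xbar ∈ P)
    (zbar0 : Fin J0 → ℝ) (zbar : (i : Fin m) → Fin (J i) → ℝ)
    (hzbar0 : ∀ j, zbar0 j = 0 ∨ zbar0 j = 1) (hzbar : ∀ i j, zbar i j = 0 ∨ zbar i j = 1)
    (hfeas1 : ∀ i, b i ≤ ∑ j, ψ i j * zbar i j)
    (hfeas2 : ∀ j, B * (1 - zbar0 j) ≤ φ0 j xbar)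
    (hfeas3 : ∀ i j, B * (1 - zbar i j) ≤ φ i j xbar)
    (hopt : ∀ x ∈ P, ∀ (z0 : Fin J0 → ℝ) (z : (i : Fin m) → Fin (J i) → ℝ),
      (∀ j, z0 j = 0 ∨ z0 j = 1) → (∀ i j, z i j = 0 ∨ z i j = 1) →
      (∀ i, b i ≤ ∑ j, ψ i j * z i j) →
      (∀ j, B * (1 - z0 j) ≤ φ0 j x) →
      (∀ i j, B * (1 - z i j) ≤ φ i j x) →
      θ x + ∑ j, ψ0 j * z0 j ≤ θ xbar + ∑ j, ψ0 j * zbar0 j) :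
    (∀ i, b i ≤ ∑ j, ψ i j * Hs (φ i j xbar)) ∧
    (∀ x ∈ P, (∀ i, b i ≤ ∑ j, ψ i j * Hs (φ i j x)) →
      θ x + ∑ j, ψ0 j * Hs (φ0 j x) ≤ θ xbar + ∑ j, ψ0 j * Hs (φ0 j xbar)) := by
  constructor
  · intro i
    refine (hfeas1 i).trans (Finset.sum_le_sum fun j _ => ?_)
    exact mul_le_mul_of_nonneg_left (zle_Hs (hzbar i j) (hfeas3 i j)) (hψ i j)
  · intro x hx hfeas
    have key := hopt x hx (fun j => Hs (φ0 j x)) (fun i j => Hs (φ i j x))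
      (fun j => Hs_mem _) (fun i j => Hs_mem _) hfeas
      (fun j => Hs_constr (hlow0 x hx j)) (fun i j => Hs_constr (hlow x hx i j))
    refine key.trans (add_le_add_right (Finset.sum_le_sum fun j _ => ?_) _)
    exact mul_le_mul_of_nonneg_left (zle_Hs (hzbar0 j) (hfeas2 j)) (hψ0 j)
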